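/- Let A be a unital C*-algebra, let r ≥ 1 and k ≥ 1, and let p be a projection in M_r(A). If there is an r × (r + k) matrix v over A with v * vᴴ = p and vᴴ * v = diag(p, 1_k) (block-diagonal), then there exists an r × (r + k) rectangular unitary over A; in particular A does not have Invariant Basis Number. -/

import Mathlib

open Matrix

/-- An `m × n` matrix `U` over a `*`-ring is a *rectangular unitary* if
`U * Uᴴ = 1` and `Uᴴ * U = 1`. -/
def IsRectangularUnitary {A : Type*} [Ring A] [StarRing A] {m n : ℕ}
    (U : Matrix (Fin m) (Fin n) A) : Prop :=
  U * Uᴴ = 1 ∧ Uᴴ * U = 1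

/-- A unital C*-algebra has *Invariant Basis Number* if every rectangular
unitary over it is square. -/
def HasIBN (A : Type*) [Ring A] [StarRing A] : Prop :=
  ∀ m n : ℕ, (∃ U : Matrix (Fin m) (Fin n) A, IsRectangularUnitary U) → m = n

lemma matrix_eq_zero_of_conjTranspose_mul_self {A : Type*} [NormedRing A] [StarRing A]
    [CStarRing A] [CompleteSpace A] [NormedAlgebra ℂ A] [StarModule ℂ A]
    {m n : Type*} [Fintype m] (x : Matrix m n A) (h : xᴴ * x = 0) : x = 0 := by
  letI : CStarAlgebra A := { }
  letI := CStarAlgebra.spectralOrder A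
  haveI := CStarAlgebra.spectralOrderedRing A
  ext i j
  have hj := congrFun (congrFun h j) j
  simp only [Matrix.mul_apply, Matrix.conjTranspose_apply, Matrix.zero_apply] at hj
  have h0 := (Finset.sum_eq_zero_iff_of_nonneg
    (fun i _ => star_mul_self_nonneg (x i j))).mp hj i (Finset.mem_univ i)
  simpa using (CStarRing.star_mul_self_eq_zero_iff (x i j)).mp h0

/-- If `r, k ≥ 1`, `p` is a projection in `M_r(A)`, and `v` is an `r × (r + k)`
matrix over `A` with `v * vᴴ = p` and `vᴴ * v = diag(p, 1_k)`, then there is an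
`r × (r + k)` rectangular unitary over `A`; in particular `A` does not have
Invariant Basis Number. -/
theorem exists_rectangularUnitary_of_projection_stably_equiv_shift
    (A : Type*) [NormedRing A] [StarRing A] [CStarRing A] [CompleteSpace A]
    [NormedAlgebra ℂ A] [StarModule ℂ A]
    (r k : ℕ) (hr : 1 ≤ r) (hk : 1 ≤ k)
    (p : Matrix (Fin r) (Fin r) A)
    (hp_star : pᴴ = p) (hp_idem : p * p = p)
    (v : Matrix (Fin r) (Fin r ⊕ Fin k) A)
    (hv₁ : v * vᴴ = p) (hv₂ : vᴴ * v = Matrix.fromBlocks p 0 0 1) :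
    (∃ U : Matrix (Fin r) (Fin (r + k)) A, IsRectangularUnitary U) ∧ ¬ HasIBN A := by
  -- Step 1: `p * v = v`.
  have hB : (Matrix.fromBlocks p 0 0 (1 : Matrix (Fin k) (Fin k) A)) *
      Matrix.fromBlocks p 0 0 1 = Matrix.fromBlocks p 0 0 1 := by
    simp [Matrix.fromBlocks_multiply, hp_idem]
  have h' : vᴴ * (p * v) = vᴴ * v := by
    conv_lhs => rw [← hv₁, Matrix.mul_assoc, ← Matrix.mul_assoc, hv₂, hB, ← hv₂]
  have hpv : p * v = v := by
    have hx : (v - p * v)ᴴ * (v - p * v) = 0 := by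
      have e1 : (p * v)ᴴ = vᴴ * p := by rw [Matrix.conjTranspose_mul, hp_star]
      have e2 : vᴴ * p * v = vᴴ * v := by rw [Matrix.mul_assoc]; exact h'
      have e3 : vᴴ * p * (p * v) = vᴴ * v := by
        rw [Matrix.mul_assoc, ← Matrix.mul_assoc p p v, hp_idem]; exact h'
      rw [Matrix.conjTranspose_sub, e1, Matrix.sub_mul, Matrix.mul_sub, Matrix.mul_sub,
        e2, e3, h', sub_self]
    have := matrix_eq_zero_of_conjTranspose_mul_self _ hx
    rw [sub_eq_zero] at this
    exact this.symm
  -- Step 2: `v * fromBlocks p 0 0 1 = v`.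
  have hvB : v * (Matrix.fromBlocks p 0 0 1 : Matrix (Fin r ⊕ Fin k) (Fin r ⊕ Fin k) A) = v := by
    rw [← hv₂, ← Matrix.mul_assoc, hv₁, hpv]
  -- Block decomposition of v.
  set v₁ := v.toCols₁ with hv₁def
  set v₂ := v.toCols₂ with hv₂def
  have hv : v = fromCols v₁ v₂ := (fromCols_toCols v).symm
  -- block identities
  have hblocks : Matrix.fromBlocks (v₁ᴴ * v₁) (v₁ᴴ * v₂) (v₂ᴴ * v₁) (v₂ᴴ * v₂) =
      Matrix.fromBlocks p 0 0 1 := by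
    rw [← hv₂]
    conv_rhs => rw [hv, conjTranspose_fromCols_eq_fromRows_conjTranspose,
      fromRows_mul_fromCols]
  obtain ⟨h11, h12, h21, h22⟩ := Matrix.fromBlocks_inj.mp hblocks
  have hvB' : fromCols (v₁ * p) v₂ = fromCols v₁ v₂ := by
    have h0 : (fromCols v₁ v₂) * (Matrix.fromBlocks p 0 0 1 : Matrix (Fin r ⊕ Fin k) (Fin r ⊕ Fin k) A) = fromCols v₁ v₂ := by
      rw [← hv]; exact hvB
    rw [fromCols_mul_fromBlocks] at h0
    simpa using h0
  obtain ⟨h1p, -⟩ := fromCols_inj hvB'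
  have hpv₁ : p * v₁ = v₁ := by
    have := congrArg Matrix.toCols₁ hpv
    ext i j
    have := congrFun (congrFun this i) j
    simpa [Matrix.toCols₁, Matrix.mul_apply, hv₁def] using this
  have hpv₂ : p * v₂ = v₂ := by
    have := congrArg Matrix.toCols₂ hpv
    ext i j
    have := congrFun (congrFun this i) j
    simpa [Matrix.toCols₂, Matrix.mul_apply, hv₂def] using this
  -- Step 3: the rectangular unitary on `Fin r ⊕ Fin k` columns
  set u : Matrix (Fin r) (Fin r ⊕ Fin k) A := fromCols (v₁ + (1 - p)) v₂ with hu
  have hq : (1 - p)ᴴ = (1 - p) := by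
    rw [Matrix.conjTranspose_sub, hp_star, Matrix.conjTranspose_one]
  have hqq : (1 - p) * (1 - p) = 1 - p := by
    rw [Matrix.mul_sub, Matrix.mul_one, Matrix.sub_mul, Matrix.one_mul, hp_idem]
    abel
  have hv₁q : v₁ * (1 - p) = 0 := by
    rw [Matrix.mul_sub, Matrix.mul_one, h1p, sub_self]
  have hqv₁ : (1 - p) * v₁ = 0 := by
    rw [Matrix.sub_mul, Matrix.one_mul, hpv₁, sub_self]
  have hqv₂ : (1 - p) * v₂ = 0 := by
    rw [Matrix.sub_mul, Matrix.one_mul, hpv₂, sub_self]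
  have hqv₁' : v₁ᴴ * (1 - p) = 0 := by
    have := congrArg Matrix.conjTranspose hqv₁
    simpa [Matrix.conjTranspose_mul, hq] using this
  have hqv₂' : v₂ᴴ * (1 - p) = 0 := by
    have := congrArg Matrix.conjTranspose hqv₂
    simpa [Matrix.conjTranspose_mul, hq] using this
  have hqv₁'' : (1 - p) * v₁ᴴ = 0 := by
    have := congrArg Matrix.conjTranspose hv₁q
    simpa [Matrix.conjTranspose_mul, hq] using this
  have hvv : v₁ * v₁ᴴ + v₂ * v₂ᴴ = p := by
    rw [← hv₁]
    conv_rhs => rw [hv, conjTranspose_fromCols_eq_fromRows_conjTranspose,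
      fromCols_mul_fromRows]
  have huu : u * uᴴ = 1 := by
    rw [hu, conjTranspose_fromCols_eq_fromRows_conjTranspose, fromCols_mul_fromRows]
    rw [Matrix.conjTranspose_add, hq, Matrix.add_mul, Matrix.mul_add, Matrix.mul_add]
    rw [hv₁q, hqv₁'', hqq]
    calc v₁ * v₁ᴴ + 0 + (0 + (1 - p)) + v₂ * v₂ᴴ
        = (v₁ * v₁ᴴ + v₂ * v₂ᴴ) + (1 - p) := by abel
      _ = p + (1 - p) := by rw [hvv]
      _ = 1 := by abel
  have huu' : uᴴ * u = 1 := by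
    rw [hu, conjTranspose_fromCols_eq_fromRows_conjTranspose, Matrix.conjTranspose_add, hq,
      fromRows_mul_fromCols, ← Matrix.fromBlocks_one, Matrix.fromBlocks_inj]
    refine ⟨?_, ?_, ?_, ?_⟩
    · rw [Matrix.add_mul, Matrix.mul_add, Matrix.mul_add, h11, hqv₁', hqv₁, hqq]
      abel
    · rw [Matrix.add_mul, h12, hqv₂]
      simp
    · rw [Matrix.mul_add, h21, hqv₂']
      simp
    · exact h22
  -- Step 4: reindex
  have hmain : ∃ U : Matrix (Fin r) (Fin (r + k)) A, IsRectangularUnitary U := by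
    refine ⟨u.submatrix id finSumFinEquiv.symm, ?_, ?_⟩
    · rw [Matrix.conjTranspose_submatrix, Matrix.submatrix_mul_equiv]
      simp [huu]
    · rw [Matrix.conjTranspose_submatrix]
      have h := Matrix.submatrix_mul_equiv uᴴ u (⇑finSumFinEquiv.symm) (Equiv.refl (Fin r))
        (⇑finSumFinEquiv.symm)
      simp only [Equiv.coe_refl] at h
      rw [h, huu', Matrix.submatrix_one_equiv]
  refine ⟨hmain, fun hibn => ?_⟩
  have := hibn r (r + k) hmain
  omega
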